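/- Let E be a real Banach space such that the unit sphere of the dual space E′ is separable in the weak* topology σ(E′,E). Then for every r > 0 there exists a countable family 𝓕 of weakly closed (σ(E,E′)-closed) subsets of E, each contained in {x ∈ E : ‖x‖ > r}, such that {x ∈ E : ‖x‖ > r} = ⋃_{F ∈ 𝓕} Int_w(F), where Int_w denotes the interior with respect to the weak topology σ(E,E′). -/

import Mathlib

open TopologicalSpace Filter Set

/-- A family `N` of subsets of a topological space `X` is a *k-network* if whenever `K ⊆ U`
with `K` compact and `U` open, there is a finite subfamily `F ⊆ N` with `K ⊆ ⋃₀ F ⊆ U`. -/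
def IsKNetwork {X : Type*} [TopologicalSpace X] (N : Set (Set X)) : Prop :=
  ∀ K U : Set X, IsCompact K → IsOpen U → K ⊆ U →
    ∃ F : Set (Set X), F ⊆ N ∧ F.Finite ∧ K ⊆ ⋃₀ F ∧ ⋃₀ F ⊆ U

/-- A family `N` of subsets of `X` is a *network* if for every `x` and every open `U ∋ x`
there is `A ∈ N` with `x ∈ A ⊆ U`. -/
def IsNetwork {X : Type*} [TopologicalSpace X] (N : Set (Set X)) : Prop :=
  ∀ (x : X) (U : Set X), IsOpen U → x ∈ U → ∃ A ∈ N, x ∈ A ∧ A ⊆ U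

/-- A family of subsets is *locally finite* if every point has a neighbourhood meeting
only finitely many of its members. -/
def IsLocallyFiniteFamily {X : Type*} [TopologicalSpace X] (N : Set (Set X)) : Prop :=
  ∀ x : X, ∃ V ∈ nhds x, {A ∈ N | (A ∩ V).Nonempty}.Finite

/-- A family of subsets is *σ-locally finite* if it is a countable union of locally finite
families. -/
def IsSigmaLocallyFinite {X : Type*} [TopologicalSpace X] (N : Set (Set X)) : Prop :=
  ∃ f : ℕ → Set (Set X), (∀ n, IsLocallyFiniteFamily (f n)) ∧ N = ⋃ n, f n

/-- An *ℵ-space* is a regular Hausdorff space with a σ-locally finite k-network. -/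
def IsAlephSpace (X : Type*) [TopologicalSpace X] : Prop :=
  RegularSpace X ∧ T2Space X ∧ ∃ N : Set (Set X), IsSigmaLocallyFinite N ∧ IsKNetwork N

/-- An *ℵ₀-space* is a regular Hausdorff space with a countable k-network. -/
def IsAleph0Space (X : Type*) [TopologicalSpace X] : Prop :=
  RegularSpace X ∧ T2Space X ∧ ∃ N : Set (Set X), N.Countable ∧ IsKNetwork N

/-- If the unit sphere of the dual of a Banach space `E` is weak*-separable, then for each
`r > 0` the set `{x : ‖x‖ > r}` is the union of the weak interiors of a countable family of
weakly closed sets contained in it. -/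
theorem countable_weaklyClosed_cover_of_weakStar_separable_dual_sphere
    (E : Type) [NormedAddCommGroup E] [NormedSpace ℝ E] [CompleteSpace E]
    (D : Set (WeakDual ℝ E)) (hDc : D.Countable)
    (hDs : ∀ φ ∈ D, ‖WeakDual.toStrongDual φ‖ = 1)
    (hDd : {φ : WeakDual ℝ E | ‖WeakDual.toStrongDual φ‖ = 1} ⊆ closure D) :
    ∀ r : ℝ, 0 < r →
      ∃ 𝓕 : Set (Set (WeakSpace ℝ E)), 𝓕.Countable ∧
        (∀ F ∈ 𝓕, IsClosed F ∧ F ⊆ {x : WeakSpace ℝ E | r < @Norm.norm E _ x}) ∧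
        {x : WeakSpace ℝ E | r < @Norm.norm E _ x} = ⋃ F ∈ 𝓕, interior F := by

  intro r hr
  classical
  set S : Set (WeakSpace ℝ E) := {x : WeakSpace ℝ E | r < @Norm.norm E _ x} with hS
  refine ⟨(fun p : WeakDual ℝ E × ℚ => {x : WeakSpace ℝ E | (p.2 : ℝ) ≤ p.1 x}) ''
      (D ×ˢ {q : ℚ | r < (q : ℝ)}), (hDc.prod (Set.to_countable _)).image _, ?_, ?_⟩
  · rintro F ⟨⟨φ, q⟩, ⟨hφD, hq⟩, rfl⟩
    have hcont : Continuous fun x : WeakSpace ℝ E => φ x :=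
      WeakBilin.eval_continuous (topDualPairing ℝ E).flip φ
    constructor
    · exact isClosed_le continuous_const hcont
    · intro x hx
      have hb : φ x ≤ @Norm.norm E _ x := by
        have := (WeakDual.toStrongDual φ).le_opNorm (show E from x)
        rw [hDs φ hφD, one_mul] at this
        exact (le_abs_self _).trans (by rw [Real.norm_eq_abs] at this; exact this)
      exact lt_of_lt_of_le hq (le_trans hx hb)
  · ext x
    simp only [Set.mem_iUnion, Set.mem_image, Prod.exists]
    constructor
    · intro hx
      have hxS : r < @Norm.norm E _ x := hx
      have hx0 : (x : WeakSpace ℝ E) ≠ 0 := by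
        intro h; have h' : (show E from x) = 0 := h; rw [h', norm_zero] at hxS; exact absurd hxS (not_lt.mpr hr.le)
      obtain ⟨g, hg1, hgx⟩ := exists_dual_vector ℝ (show E from x) (hr.trans hxS).ne'
      obtain ⟨q, hq1, hq2⟩ := exists_rat_btwn hxS
      set ψ : WeakDual ℝ E := g with hψ
      have hψs : ‖WeakDual.toStrongDual ψ‖ = 1 := hg1
      have hψx : ψ x = @Norm.norm E _ x := hgx
      -- the weak*-open set of functionals φ with φ x > q contains ψ and meets D
      have hUopen : IsOpen {φ : WeakDual ℝ E | (q : ℝ) < φ x} :=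
        isOpen_lt continuous_const (WeakDual.eval_continuous (show E from x))
      have hψU : ψ ∈ {φ : WeakDual ℝ E | (q : ℝ) < φ x} := by
        simp only [Set.mem_setOf_eq, hψx]; exact hq2
      have hψcl : ψ ∈ closure D := hDd hψs
      obtain ⟨φ, hφU, hφD⟩ := mem_closure_iff.mp hψcl _ hUopen hψU
      refine ⟨{y : WeakSpace ℝ E | (q : ℝ) ≤ φ y}, ⟨φ, q, ⟨hφD, hq1⟩, rfl⟩, ?_⟩
      have hopen : IsOpen {y : WeakSpace ℝ E | (q : ℝ) < φ y} :=
        isOpen_lt continuous_const (WeakBilin.eval_continuous (topDualPairing ℝ E).flip φ)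
      have hsub : {y : WeakSpace ℝ E | (q : ℝ) < φ y} ⊆
          interior {y : WeakSpace ℝ E | (q : ℝ) ≤ φ y} :=
        interior_maximal (fun y hy => show (q : ℝ) ≤ φ y from le_of_lt hy) hopen
      exact hsub hφU
    · rintro ⟨F, ⟨φ, q, ⟨hφD, hq⟩, rfl⟩, hxint⟩
      have hx : x ∈ {y : WeakSpace ℝ E | (q : ℝ) ≤ φ y} := interior_subset hxint
      have hb : φ x ≤ @Norm.norm E _ x := by
        have := (WeakDual.toStrongDual φ).le_opNorm (show E from x)
        rw [hDs φ hφD, one_mul] at this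
        exact (le_abs_self _).trans (by rw [Real.norm_eq_abs] at this; exact this)
      exact lt_of_lt_of_le hq (le_trans hx hb)
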